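/- Let λ₁, λ₂ > 0 with λ₁ ≠ λ₂, set s₃ = 2λ₁λ₂(λ₁+λ₂), a₁(Δ) = e^{−λ₁Δ} + e^{−λ₂Δ}, a₂(Δ) = −e^{−(λ₁+λ₂)Δ}, and S(Δ) = (1+a₁−a₂)(1−a₁−a₂)(1+a₂)/(1−a₂). Let A < B and let f be three times continuously differentiable in neighborhoods of A and B with f(A) ≠ 0 and f(B) ≠ 0. Define g_A(Δ) = (f(A) − a₁ f(A+Δ) − a₂ f(A+2Δ)) + (−a₁ f(A) + (1+a₁²) f(A+Δ) + (a₁a₂ − a₁) f(A+2Δ) − a₂ f(A+3Δ)) and g_B(Δ) = (f(B) − a₁ f(B−Δ) − a₂ f(B−2Δ)) + (−a₁ f(B) + (1+a₁²) f(B−Δ) + (a₁a₂ − a₁) f(B−2Δ) − a₂ f(B−3Δ)). Then lim_{Δ→0⁺} g_A(Δ)/(S(Δ) f(A)) = (f'''(A) − (λ₁² + λ₁λ₂ + λ₂²) f'(A) + λ₁λ₂(λ₁+λ₂) f(A)) / (s₃ f(A)), and lim_{Δ→0⁺} g_B(Δ)/(S(Δ) f(B)) = (−f'''(B) + (λ₁²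 + λ₁λ₂ + λ₂²) f'(B) + λ₁λ₂(λ₁+λ₂) f(B)) / (s₃ f(B)). -/

import Mathlib

open Filter Asymptotics

set_option maxHeartbeats 4000000

lemma succ_step {n : ℕ} {f : ℝ → ℝ} {x : ℝ} (hf : ContDiffAt ℝ (n + 1 : ℕ) f x) :
    (∀ᶠ y in nhds x, DifferentiableAt ℝ f y) ∧ ContDiffAt ℝ n (deriv f) x := by
  obtain ⟨u, hu, hfu⟩ := hf.contDiffOn le_rfl (by simp)
  obtain ⟨t, htu, ht, hxt⟩ := mem_nhds_iff.mp hu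
  have h3 : ContDiffOn ℝ (n + 1 : ℕ) f t := hfu.mono htu
  rw [show ((n+1:ℕ) : WithTop ℕ∞) = (n : WithTop ℕ∞) + 1 by push_cast; ring,
     contDiffOn_succ_iff_deriv_of_isOpen ht] at h3
  exact ⟨(ht.eventually_mem hxt).mono
      (fun y hy => (h3.1 y hy).differentiableAt (ht.mem_nhds hy)),
    h3.2.2.contDiffAt (ht.mem_nhds hxt)⟩

lemma step_littleO {R R' : ℝ → ℝ} {n : ℕ} (hR0 : R 0 = 0)
    (hd : ∀ᶠ x in nhds (0:ℝ), HasDerivAt R (R' x) x)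
    (h : R' =o[nhds (0:ℝ)] fun x => x ^ n) :
    R =o[nhds (0:ℝ)] fun x => x ^ (n + 1) := by
  rw [isLittleO_iff] at *
  intro c hc
  obtain ⟨δ, hδ, hball⟩ := Metric.eventually_nhds_iff.mp (hd.and (h hc))
  rw [Metric.eventually_nhds_iff]
  refine ⟨δ, hδ, fun x hx => ?_⟩
  rw [Real.dist_eq, sub_zero] at hx
  have hseg : ∀ t ∈ Set.uIcc (0:ℝ) x, dist t 0 < δ := by
    intro t ht
    rw [Real.dist_eq, sub_zero]
    have h1 : |t| ≤ |x| := by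
      rcases le_total (0:ℝ) x with hx0 | hx0
      · rw [Set.uIcc_of_le hx0] at ht
        rw [abs_of_nonneg ht.1, abs_of_nonneg hx0]; exact ht.2
      · rw [Set.uIcc_of_ge hx0] at ht
        rw [abs_of_nonpos ht.2, abs_of_nonpos hx0]; exact neg_le_neg ht.1
    exact lt_of_le_of_lt h1 hx
  have key := (convex_uIcc (0:ℝ) x).norm_image_sub_le_of_norm_hasDerivWithin_le
    (f := R) (f' := R') (C := c * |x| ^ n)
    (fun t ht => ((hball (hseg t ht)).1).hasDerivWithinAt)
    (fun t ht => by
      have h2 := (hball (hseg t ht)).2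
      have h3 : ‖t ^ n‖ ≤ |x| ^ n := by
        rw [Real.norm_eq_abs, abs_pow]
        refine pow_le_pow_left₀ (abs_nonneg t) ?_ n
        rcases le_total (0:ℝ) x with hx0 | hx0
        · rw [Set.uIcc_of_le hx0] at ht
          rw [abs_of_nonneg ht.1, abs_of_nonneg hx0]; exact ht.2
        · rw [Set.uIcc_of_ge hx0] at ht
          rw [abs_of_nonpos ht.2, abs_of_nonpos hx0]; exact neg_le_neg ht.1
      calc ‖R' t‖ ≤ c * ‖t ^ n‖ := h2
        _ ≤ c * |x| ^ n := by nlinarith [norm_nonneg (t ^ n)]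
      )
    Set.left_mem_uIcc Set.right_mem_uIcc
  rw [hR0, sub_zero, sub_zero] at key
  calc ‖R x‖ ≤ c * |x| ^ n * ‖x‖ := key
    _ = c * ‖x ^ (n+1)‖ := by
        rw [Real.norm_eq_abs, Real.norm_eq_abs, abs_pow]; ring

lemma peano1 {g : ℝ → ℝ} {x : ℝ} (hg : DifferentiableAt ℝ g x) :
    (fun h : ℝ => g (x + h) - (g x + deriv g x * h)) =o[nhds (0:ℝ)] fun h => h ^ 1 := by
  have h1 := hasDerivAt_iff_isLittleO.mp hg.hasDerivAt
  have h2 : Tendsto (fun h : ℝ => x + h) (nhds 0) (nhds x) := by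
    have : Continuous fun h : ℝ => x + h := by fun_prop
    simpa using this.tendsto 0
  have h3 := h1.comp_tendsto h2
  refine h3.congr (fun h => ?_) (fun h => ?_)
  · simp [Function.comp]; ring
  · simp [Function.comp]

lemma peano2 {g : ℝ → ℝ} {x : ℝ} (hg : ContDiffAt ℝ (2:ℕ) g x) :
    (fun h : ℝ => g (x + h) - (g x + deriv g x * h + deriv (deriv g) x * h ^ 2 / 2))
      =o[nhds (0:ℝ)] fun h => h ^ 2 := by
  obtain ⟨hev, hd⟩ := succ_step (n := 1) hg
  have hd1 : DifferentiableAt ℝ (deriv g) x := hd.differentiableAt (by simp)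
  have base := peano1 hd1
  have hev0 : ∀ᶠ h in nhds (0:ℝ), DifferentiableAt ℝ g (x + h) := by
    have h2 : Tendsto (fun h : ℝ => x + h) (nhds 0) (nhds x) := by
      have : Continuous fun h : ℝ => x + h := by fun_prop
      simpa using this.tendsto 0
    exact h2.eventually hev
  refine step_littleO (n := 1) (by simp) ?_ base
  filter_upwards [hev0] with h hh
  have H1 : HasDerivAt (fun t : ℝ => g (x + t)) (deriv g (x + h)) h := by
    simpa [Function.comp_def] using (hh.hasDerivAt.comp h ((hasDerivAt_id h).const_add x))
  have H2 : HasDerivAt (fun t : ℝ => g x + deriv g x * t + deriv (deriv g) x * t ^ 2 / 2)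
      (deriv g x + deriv (deriv g) x * h) h := by
    have p1 : HasDerivAt (fun t : ℝ => deriv g x * t) (deriv g x) h := by
      simpa using (hasDerivAt_id h).const_mul (deriv g x)
    have p2 : HasDerivAt (fun t : ℝ => deriv (deriv g) x * t ^ 2 / 2)
        (deriv (deriv g) x * h) h := by
      have := ((hasDerivAt_pow 2 h).const_mul (deriv (deriv g) x)).div_const 2
      exact this.congr_deriv (by push_cast; ring)
    exact (((hasDerivAt_const h (g x)).add p1).add p2).congr_deriv (by simp)
  exact H1.sub H2


lemma peano3 {g : ℝ → ℝ} {x : ℝ} (hg : ContDiffAt ℝ 3 g x) :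
    (fun h : ℝ => g (x + h) - (g x + deriv g x * h + deriv (deriv g) x * h ^ 2 / 2
        + deriv (deriv (deriv g)) x * h ^ 3 / 6))
      =o[nhds (0:ℝ)] fun h => h ^ 3 := by
  have hg' : ContDiffAt ℝ ((2:ℕ) + 1 : ℕ) g x := by exact_mod_cast hg
  obtain ⟨hev, hd⟩ := succ_step hg'
  have base := peano2 hd
  have hev0 : ∀ᶠ h in nhds (0:ℝ), DifferentiableAt ℝ g (x + h) := by
    have h2 : Tendsto (fun h : ℝ => x + h) (nhds 0) (nhds x) := by
      have : Continuous fun h : ℝ => x + h := by fun_prop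
      simpa using this.tendsto 0
    exact h2.eventually hev
  refine step_littleO (n := 2) (by simp) ?_ base
  filter_upwards [hev0] with h hh
  have H1 : HasDerivAt (fun t : ℝ => g (x + t)) (deriv g (x + h)) h := by
    simpa [Function.comp_def] using (hh.hasDerivAt.comp h ((hasDerivAt_id h).const_add x))
  have H2 : HasDerivAt (fun t : ℝ => g x + deriv g x * t + deriv (deriv g) x * t ^ 2 / 2
      + deriv (deriv (deriv g)) x * t ^ 3 / 6)
      (deriv g x + deriv (deriv g) x * h + deriv (deriv (deriv g)) x * h ^ 2 / 2) h := by
    have p1 : HasDerivAt (fun t : ℝ => deriv g x * t) (deriv g x) h := by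
      simpa using (hasDerivAt_id h).const_mul (deriv g x)
    have p2 : HasDerivAt (fun t : ℝ => deriv (deriv g) x * t ^ 2 / 2)
        (deriv (deriv g) x * h) h := by
      have := ((hasDerivAt_pow 2 h).const_mul (deriv (deriv g) x)).div_const 2
      exact this.congr_deriv (by push_cast; ring)
    have p3 : HasDerivAt (fun t : ℝ => deriv (deriv (deriv g)) x * t ^ 3 / 6)
        (deriv (deriv (deriv g)) x * h ^ 2 / 2) h := by
      have := ((hasDerivAt_pow 3 h).const_mul (deriv (deriv (deriv g)) x)).div_const 6
      exact this.congr_deriv (by push_cast; ring)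
    have := (((hasDerivAt_const h (g x)).add p1).add p2).add p3
    exact this.congr_deriv (by ring)
  exact H1.sub H2

lemma expo_lim (l : ℝ) :
    Tendsto (fun Δ : ℝ => (1 - Real.exp (-l * Δ)) / Δ) (nhdsWithin 0 (Set.Ioi 0)) (nhds l) := by
  have h : HasDerivAt (fun Δ : ℝ => 1 - Real.exp (-l * Δ)) l 0 := by
    have h0 : HasDerivAt (fun x : ℝ => -l * x) (-l) 0 := by
      simpa using (hasDerivAt_id (0:ℝ)).const_mul (-l)
    have h1 := (Real.hasDerivAt_exp ((-l) * 0)).comp 0 h0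
    have h2 := h1.const_sub 1
    simpa using h2
  have h3 := hasDerivAt_iff_tendsto_slope.mp h
  have h4 : Tendsto (slope (fun Δ : ℝ => 1 - Real.exp (-l * Δ)) 0)
      (nhdsWithin 0 (Set.Ioi 0)) (nhds l) :=
    h3.mono_left (nhdsWithin_mono 0 (fun y hy => Set.mem_compl_singleton_iff.mpr (ne_of_gt hy)))
  refine h4.congr fun Δ => ?_
  rw [slope_def_field]
  norm_num


lemma side (l₁ l₂ : ℝ) (h₁ : 0 < l₁) (h₂ : 0 < l₂) (f : ℝ → ℝ) (C : ℝ)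
    (hf : ContDiffAt ℝ 3 f C) (hC : f C ≠ 0) (ε : ℝ) (hε : ε = 1 ∨ ε = -1) :
    Tendsto (fun Δ : ℝ =>
      ((f C - (Real.exp (-l₁ * Δ) + Real.exp (-l₂ * Δ)) * f (C + ε * Δ)
          - (-Real.exp (-(l₁ + l₂) * Δ)) * f (C + ε * (2 * Δ)))
        + (-(Real.exp (-l₁ * Δ) + Real.exp (-l₂ * Δ)) * f C
            + (1 + (Real.exp (-l₁ * Δ) + Real.exp (-l₂ * Δ)) ^ 2) * f (C + ε * Δ)
            + ((Real.exp (-l₁ * Δ) + Real.exp (-l₂ * Δ)) * (-Real.exp (-(l₁ + l₂) * Δ))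
                - (Real.exp (-l₁ * Δ) + Real.exp (-l₂ * Δ))) * f (C + ε * (2 * Δ))
            - (-Real.exp (-(l₁ + l₂) * Δ)) * f (C + ε * (3 * Δ))))
      / (((1 + (Real.exp (-l₁ * Δ) + Real.exp (-l₂ * Δ)) - (-Real.exp (-(l₁ + l₂) * Δ)))
          * (1 - (Real.exp (-l₁ * Δ) + Real.exp (-l₂ * Δ)) - (-Real.exp (-(l₁ + l₂) * Δ)))
          * (1 + (-Real.exp (-(l₁ + l₂) * Δ))) / (1 - (-Real.exp (-(l₁ + l₂) * Δ)))) * f C))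
      (nhdsWithin 0 (Set.Ioi 0))
      (nhds ((ε * deriv (deriv (deriv f)) C - ε * (l₁ ^ 2 + l₁ * l₂ + l₂ ^ 2) * deriv f C
          + l₁ * l₂ * (l₁ + l₂) * f C) / (2 * l₁ * l₂ * (l₁ + l₂) * f C))) := by
  have hε' : ε ≠ 0 := by rcases hε with rfl | rfl <;> norm_num
  have hε3 : ε ^ 3 = ε := by rcases hε with rfl | rfl <;> norm_num
  have hR := peano3 hf
  set d1 := deriv f C with hd1
  set d2 := deriv (deriv f) C with hd2
  set d3 := deriv (deriv (deriv f)) C with hd3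
  -- basic limits
  have hX := expo_lim l₁
  have hY := expo_lim l₂
  have hW := expo_lim (l₁ + l₂)
  have hu : Tendsto (fun Δ : ℝ => Real.exp (-l₁ * Δ)) (nhdsWithin 0 (Set.Ioi 0)) (nhds 1) := by
    have hc : Continuous fun Δ : ℝ => Real.exp (-l₁ * Δ) := by fun_prop
    simpa using (hc.tendsto 0).mono_left nhdsWithin_le_nhds
  have hv : Tendsto (fun Δ : ℝ => Real.exp (-l₂ * Δ)) (nhdsWithin 0 (Set.Ioi 0)) (nhds 1) := by
    have hc : Continuous fun Δ : ℝ => Real.exp (-l₂ * Δ) := by fun_prop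
    simpa using (hc.tendsto 0).mono_left nhdsWithin_le_nhds
  -- remainder limits
  have hr1 : Tendsto (fun Δ : ℝ => (f (C + ε * Δ) - (f C + d1 * (ε * Δ) + d2 * (ε * Δ) ^ 2 / 2
      + d3 * (ε * Δ) ^ 3 / 6)) / (ε * Δ) ^ 3) (nhdsWithin 0 (Set.Ioi 0)) (nhds 0) := by
    have hm : Tendsto (fun Δ : ℝ => ε * Δ) (nhdsWithin 0 (Set.Ioi 0)) (nhds (0:ℝ)) := by
      have hc : Continuous fun Δ : ℝ => ε * Δ := by fun_prop
      simpa using (hc.tendsto 0).mono_left nhdsWithin_le_nhds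
    exact hR.tendsto_div_nhds_zero.comp hm
  have hr2 : Tendsto (fun Δ : ℝ => (f (C + ε * (2 * Δ)) - (f C + d1 * (ε * (2 * Δ))
      + d2 * (ε * (2 * Δ)) ^ 2 / 2 + d3 * (ε * (2 * Δ)) ^ 3 / 6)) / (ε * (2 * Δ)) ^ 3)
      (nhdsWithin 0 (Set.Ioi 0)) (nhds 0) := by
    have hm : Tendsto (fun Δ : ℝ => ε * (2 * Δ)) (nhdsWithin 0 (Set.Ioi 0)) (nhds (0:ℝ)) := by
      have hc : Continuous fun Δ : ℝ => ε * (2 * Δ) := by fun_prop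
      simpa using (hc.tendsto 0).mono_left nhdsWithin_le_nhds
    exact hR.tendsto_div_nhds_zero.comp hm
  have hr3 : Tendsto (fun Δ : ℝ => (f (C + ε * (3 * Δ)) - (f C + d1 * (ε * (3 * Δ))
      + d2 * (ε * (3 * Δ)) ^ 2 / 2 + d3 * (ε * (3 * Δ)) ^ 3 / 6)) / (ε * (3 * Δ)) ^ 3)
      (nhdsWithin 0 (Set.Ioi 0)) (nhds 0) := by
    have hm : Tendsto (fun Δ : ℝ => ε * (3 * Δ)) (nhdsWithin 0 (Set.Ioi 0)) (nhds (0:ℝ)) := by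
      have hc : Continuous fun Δ : ℝ => ε * (3 * Δ) := by fun_prop
      simpa using (hc.tendsto 0).mono_left nhdsWithin_le_nhds
    exact hR.tendsto_div_nhds_zero.comp hm
  -- continuous coefficient limits
  have hc4 : Tendsto (fun Δ : ℝ =>
      (1 + (Real.exp (-l₁ * Δ) + Real.exp (-l₂ * Δ)) ^ 2 - (Real.exp (-l₁ * Δ) + Real.exp (-l₂ * Δ)))
      + 8 * (-(Real.exp (-l₁ * Δ) + Real.exp (-l₂ * Δ)) * (Real.exp (-l₁ * Δ) * Real.exp (-l₂ * Δ))
          - (Real.exp (-l₁ * Δ) + Real.exp (-l₂ * Δ)) + Real.exp (-l₁ * Δ) * Real.exp (-l₂ * Δ))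
      + 27 * (Real.exp (-l₁ * Δ) * Real.exp (-l₂ * Δ)))
      (nhdsWithin 0 (Set.Ioi 0))
      (nhds ((1 + ((1:ℝ) + 1) ^ 2 - (1 + 1)) + 8 * (-(1 + 1) * (1 * 1) - (1 + 1) + 1 * 1) + 27 * (1 * 1))) := by
    exact ((((tendsto_const_nhds.add ((hu.add hv).pow 2)).sub (hu.add hv)).add
      (tendsto_const_nhds.mul ((((hu.add hv).neg.mul (hu.mul hv)).sub (hu.add hv)).add (hu.mul hv)))).add
      (tendsto_const_nhds.mul (hu.mul hv)))

  -- abbreviations for coefficient tendstos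
  have c1t : Tendsto (fun Δ : ℝ =>
      1 + (Real.exp (-l₁ * Δ) + Real.exp (-l₂ * Δ)) ^ 2 - (Real.exp (-l₁ * Δ) + Real.exp (-l₂ * Δ)))
      (nhdsWithin 0 (Set.Ioi 0)) (nhds (1 + ((1:ℝ) + 1) ^ 2 - (1 + 1))) :=
    (tendsto_const_nhds.add ((hu.add hv).pow 2)).sub (hu.add hv)
  have c2t : Tendsto (fun Δ : ℝ =>
      -(Real.exp (-l₁ * Δ) + Real.exp (-l₂ * Δ)) * (Real.exp (-l₁ * Δ) * Real.exp (-l₂ * Δ))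
        - (Real.exp (-l₁ * Δ) + Real.exp (-l₂ * Δ)) + Real.exp (-l₁ * Δ) * Real.exp (-l₂ * Δ))
      (nhdsWithin 0 (Set.Ioi 0)) (nhds (-((1:ℝ) + 1) * (1 * 1) - (1 + 1) + 1 * 1)) :=
    (((hu.add hv).neg.mul (hu.mul hv)).sub (hu.add hv)).add (hu.mul hv)
  have c3t : Tendsto (fun Δ : ℝ => Real.exp (-l₁ * Δ) * Real.exp (-l₂ * Δ))
      (nhdsWithin 0 (Set.Ioi 0)) (nhds ((1:ℝ) * 1)) := hu.mul hv
  -- numerator (divided by Δ^3) tendsto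
  have hN : Tendsto (fun Δ : ℝ =>
      (1 - Real.exp (-l₁ * Δ)) / Δ * ((1 - Real.exp (-l₂ * Δ)) / Δ)
          * ((1 - Real.exp (-l₁ * Δ)) / Δ + (1 - Real.exp (-l₂ * Δ)) / Δ) * f C
      + (-(((1 - Real.exp (-l₁ * Δ)) / Δ) ^ 2
            + (1 - Real.exp (-l₁ * Δ)) / Δ * ((1 - Real.exp (-l₂ * Δ)) / Δ)
            + ((1 - Real.exp (-l₂ * Δ)) / Δ) ^ 2)
          + 2 * ((1 - Real.exp (-l₁ * Δ)) / Δ) * ((1 - Real.exp (-l₂ * Δ)) / Δ)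
            * ((1 - Real.exp (-l₁ * Δ)) + (1 - Real.exp (-l₂ * Δ)))) * (ε * d1)
      + ((-3) * ((1 - Real.exp (-l₁ * Δ)) / Δ) * (1 - Real.exp (-l₁ * Δ))
          - 3 * ((1 - Real.exp (-l₂ * Δ)) / Δ) * (1 - Real.exp (-l₂ * Δ))
          - (1 - Real.exp (-l₁ * Δ)) / Δ * (1 - Real.exp (-l₂ * Δ))
          + 4 * ((1 - Real.exp (-l₁ * Δ)) / Δ) * (1 - Real.exp (-l₂ * Δ))
            * ((1 - Real.exp (-l₁ * Δ)) + (1 - Real.exp (-l₂ * Δ)))) * (ε ^ 2 * d2 / 2)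
      + ((1 + (Real.exp (-l₁ * Δ) + Real.exp (-l₂ * Δ)) ^ 2 - (Real.exp (-l₁ * Δ) + Real.exp (-l₂ * Δ)))
          + 8 * (-(Real.exp (-l₁ * Δ) + Real.exp (-l₂ * Δ)) * (Real.exp (-l₁ * Δ) * Real.exp (-l₂ * Δ))
              - (Real.exp (-l₁ * Δ) + Real.exp (-l₂ * Δ)) + Real.exp (-l₁ * Δ) * Real.exp (-l₂ * Δ))
          + 27 * (Real.exp (-l₁ * Δ) * Real.exp (-l₂ * Δ))) * (ε ^ 3 * d3 / 6)
      + ((1 + (Real.exp (-l₁ * Δ) + Real.exp (-l₂ * Δ)) ^ 2 - (Real.exp (-l₁ * Δ) + Real.exp (-l₂ * Δ)))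
            * (ε ^ 3 * 1)
            * ((f (C + ε * Δ) - (f C + d1 * (ε * Δ) + d2 * (ε * Δ) ^ 2 / 2
                + d3 * (ε * Δ) ^ 3 / 6)) / (ε * Δ) ^ 3)
          + (-(Real.exp (-l₁ * Δ) + Real.exp (-l₂ * Δ)) * (Real.exp (-l₁ * Δ) * Real.exp (-l₂ * Δ))
              - (Real.exp (-l₁ * Δ) + Real.exp (-l₂ * Δ)) + Real.exp (-l₁ * Δ) * Real.exp (-l₂ * Δ))
            * (ε ^ 3 * 8)
            * ((f (C + ε * (2 * Δ)) - (f C + d1 * (ε * (2 * Δ)) + d2 * (ε * (2 * Δ)) ^ 2 / 2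
                + d3 * (ε * (2 * Δ)) ^ 3 / 6)) / (ε * (2 * Δ)) ^ 3)
          + Real.exp (-l₁ * Δ) * Real.exp (-l₂ * Δ) * (ε ^ 3 * 27)
            * ((f (C + ε * (3 * Δ)) - (f C + d1 * (ε * (3 * Δ)) + d2 * (ε * (3 * Δ)) ^ 2 / 2
                + d3 * (ε * (3 * Δ)) ^ 3 / 6)) / (ε * (3 * Δ)) ^ 3)))
      (nhdsWithin 0 (Set.Ioi 0))
      (nhds (l₁ * l₂ * (l₁ + l₂) * f C
        + (-(l₁ ^ 2 + l₁ * l₂ + l₂ ^ 2) + 2 * l₁ * l₂ * ((1 - 1) + (1 - 1))) * (ε * d1)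
        + ((-3) * l₁ * (1 - 1) - 3 * l₂ * (1 - 1) - l₁ * (1 - 1)
            + 4 * l₁ * (1 - 1) * ((1 - 1) + (1 - 1))) * (ε ^ 2 * d2 / 2)
        + ((1 + ((1:ℝ) + 1) ^ 2 - (1 + 1)) + 8 * (-(1 + 1) * (1 * 1) - (1 + 1) + 1 * 1)
            + 27 * (1 * 1)) * (ε ^ 3 * d3 / 6)
        + ((1 + ((1:ℝ) + 1) ^ 2 - (1 + 1)) * (ε ^ 3 * 1) * 0
            + (-((1:ℝ) + 1) * (1 * 1) - (1 + 1) + 1 * 1) * (ε ^ 3 * 8) * 0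
            + (1:ℝ) * 1 * (ε ^ 3 * 27) * 0))) := by
    exact (((((( (hX.mul hY).mul (hX.add hY)).mul_const (f C)).add
      (((((hX.pow 2).add (hX.mul hY)).add (hY.pow 2)).neg.add
        (((tendsto_const_nhds.mul hX).mul hY).mul
          ((tendsto_const_nhds.sub hu).add (tendsto_const_nhds.sub hv)))).mul_const (ε * d1))).add
      ((((((tendsto_const_nhds.mul hX).mul (tendsto_const_nhds.sub hu)).sub
          ((tendsto_const_nhds.mul hY).mul (tendsto_const_nhds.sub hv))).sub
          (hX.mul (tendsto_const_nhds.sub hv))).add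
        ((((tendsto_const_nhds.mul hX).mul (tendsto_const_nhds.sub hv)).mul
          ((tendsto_const_nhds.sub hu).add (tendsto_const_nhds.sub hv))))).mul_const
            (ε ^ 2 * d2 / 2))).add
      (hc4.mul_const (ε ^ 3 * d3 / 6))).add
      ((((c1t.mul_const (ε ^ 3 * 1)).mul hr1).add
        ((c2t.mul_const (ε ^ 3 * 8)).mul hr2)).add
        ((c3t.mul_const (ε ^ 3 * 27)).mul hr3)))

  -- denominator (divided by Δ^3) tendsto
  have hD : Tendsto (fun Δ : ℝ =>
      (1 + Real.exp (-l₁ * Δ) + Real.exp (-l₂ * Δ) + Real.exp (-l₁ * Δ) * Real.exp (-l₂ * Δ))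
        * ((1 - Real.exp (-l₁ * Δ)) / Δ) * ((1 - Real.exp (-l₂ * Δ)) / Δ)
        * ((1 - Real.exp (-(l₁ + l₂) * Δ)) / Δ)
        / (1 + Real.exp (-l₁ * Δ) * Real.exp (-l₂ * Δ)))
      (nhdsWithin 0 (Set.Ioi 0))
      (nhds ((1 + 1 + 1 + 1 * 1) * l₁ * l₂ * (l₁ + l₂) / (1 + 1 * 1))) := by
    exact Tendsto.div
      ((((((tendsto_const_nhds.add hu).add hv).add (hu.mul hv)).mul hX).mul hY).mul hW)
      (tendsto_const_nhds.add (hu.mul hv)) (by norm_num)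
  have hQ := Tendsto.div hN (hD.mul_const (f C))
    (by
      refine mul_ne_zero ?_ hC
      positivity)

  have hEUV : ∀ Δ : ℝ, Real.exp (-(l₁ + l₂) * Δ) = Real.exp (-l₁ * Δ) * Real.exp (-l₂ * Δ) := by
    intro Δ
    rw [← Real.exp_add]
    congr 1
    ring
  have e1 : ∀ Δ : ℝ, Δ ≠ 0 →
      ((1 + (Real.exp (-l₁ * Δ) + Real.exp (-l₂ * Δ)) - (-Real.exp (-(l₁ + l₂) * Δ)))
          * (1 - (Real.exp (-l₁ * Δ) + Real.exp (-l₂ * Δ)) - (-Real.exp (-(l₁ + l₂) * Δ)))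
          * (1 + (-Real.exp (-(l₁ + l₂) * Δ))) / (1 - (-Real.exp (-(l₁ + l₂) * Δ)))) * f C
      = Δ ^ 3 *
        ((1 + Real.exp (-l₁ * Δ) + Real.exp (-l₂ * Δ) + Real.exp (-l₁ * Δ) * Real.exp (-l₂ * Δ))
          * ((1 - Real.exp (-l₁ * Δ)) / Δ) * ((1 - Real.exp (-l₂ * Δ)) / Δ)
          * ((1 - Real.exp (-(l₁ + l₂) * Δ)) / Δ)
          / (1 + Real.exp (-l₁ * Δ) * Real.exp (-l₂ * Δ)) * f C) := by
    intro Δ hΔ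
    rw [hEUV Δ]
    have h1uv : (1:ℝ) + Real.exp (-l₁ * Δ) * Real.exp (-l₂ * Δ) ≠ 0 := by positivity
    have h1uv2 : (1:ℝ) - -(Real.exp (-l₁ * Δ) * Real.exp (-l₂ * Δ)) ≠ 0 := by
      have := mul_pos (Real.exp_pos (-l₁ * Δ)) (Real.exp_pos (-l₂ * Δ))
      intro h
      nlinarith
    field_simp
    rw [div_eq_iff (by rw [sub_neg_eq_add]; positivity)]
    ring

  have e2 : ∀ Δ : ℝ, Δ ≠ 0 →
      ((f C - (Real.exp (-l₁ * Δ) + Real.exp (-l₂ * Δ)) * f (C + ε * Δ)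
          - (-Real.exp (-(l₁ + l₂) * Δ)) * f (C + ε * (2 * Δ)))
        + (-(Real.exp (-l₁ * Δ) + Real.exp (-l₂ * Δ)) * f C
            + (1 + (Real.exp (-l₁ * Δ) + Real.exp (-l₂ * Δ)) ^ 2) * f (C + ε * Δ)
            + ((Real.exp (-l₁ * Δ) + Real.exp (-l₂ * Δ)) * (-Real.exp (-(l₁ + l₂) * Δ))
                - (Real.exp (-l₁ * Δ) + Real.exp (-l₂ * Δ))) * f (C + ε * (2 * Δ))
            - (-Real.exp (-(l₁ + l₂) * Δ)) * f (C + ε * (3 * Δ))))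
      = Δ ^ 3 * (
      (1 - Real.exp (-l₁ * Δ)) / Δ * ((1 - Real.exp (-l₂ * Δ)) / Δ)
          * ((1 - Real.exp (-l₁ * Δ)) / Δ + (1 - Real.exp (-l₂ * Δ)) / Δ) * f C
      + (-(((1 - Real.exp (-l₁ * Δ)) / Δ) ^ 2
            + (1 - Real.exp (-l₁ * Δ)) / Δ * ((1 - Real.exp (-l₂ * Δ)) / Δ)
            + ((1 - Real.exp (-l₂ * Δ)) / Δ) ^ 2)
          + 2 * ((1 - Real.exp (-l₁ * Δ)) / Δ) * ((1 - Real.exp (-l₂ * Δ)) / Δ)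
            * ((1 - Real.exp (-l₁ * Δ)) + (1 - Real.exp (-l₂ * Δ)))) * (ε * d1)
      + ((-3) * ((1 - Real.exp (-l₁ * Δ)) / Δ) * (1 - Real.exp (-l₁ * Δ))
          - 3 * ((1 - Real.exp (-l₂ * Δ)) / Δ) * (1 - Real.exp (-l₂ * Δ))
          - (1 - Real.exp (-l₁ * Δ)) / Δ * (1 - Real.exp (-l₂ * Δ))
          + 4 * ((1 - Real.exp (-l₁ * Δ)) / Δ) * (1 - Real.exp (-l₂ * Δ))
            * ((1 - Real.exp (-l₁ * Δ)) + (1 - Real.exp (-l₂ * Δ)))) * (ε ^ 2 * d2 / 2)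
      + ((1 + (Real.exp (-l₁ * Δ) + Real.exp (-l₂ * Δ)) ^ 2 - (Real.exp (-l₁ * Δ) + Real.exp (-l₂ * Δ)))
          + 8 * (-(Real.exp (-l₁ * Δ) + Real.exp (-l₂ * Δ)) * (Real.exp (-l₁ * Δ) * Real.exp (-l₂ * Δ))
              - (Real.exp (-l₁ * Δ) + Real.exp (-l₂ * Δ)) + Real.exp (-l₁ * Δ) * Real.exp (-l₂ * Δ))
          + 27 * (Real.exp (-l₁ * Δ) * Real.exp (-l₂ * Δ))) * (ε ^ 3 * d3 / 6)
      + ((1 + (Real.exp (-l₁ * Δ) + Real.exp (-l₂ * Δ)) ^ 2 - (Real.exp (-l₁ * Δ) + Real.exp (-l₂ * Δ)))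
            * (ε ^ 3 * 1)
            * ((f (C + ε * Δ) - (f C + d1 * (ε * Δ) + d2 * (ε * Δ) ^ 2 / 2
                + d3 * (ε * Δ) ^ 3 / 6)) / (ε * Δ) ^ 3)
          + (-(Real.exp (-l₁ * Δ) + Real.exp (-l₂ * Δ)) * (Real.exp (-l₁ * Δ) * Real.exp (-l₂ * Δ))
              - (Real.exp (-l₁ * Δ) + Real.exp (-l₂ * Δ)) + Real.exp (-l₁ * Δ) * Real.exp (-l₂ * Δ))
            * (ε ^ 3 * 8)
            * ((f (C + ε * (2 * Δ)) - (f C + d1 * (ε * (2 * Δ)) + d2 * (ε * (2 * Δ)) ^ 2 / 2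
                + d3 * (ε * (2 * Δ)) ^ 3 / 6)) / (ε * (2 * Δ)) ^ 3)
          + Real.exp (-l₁ * Δ) * Real.exp (-l₂ * Δ) * (ε ^ 3 * 27)
            * ((f (C + ε * (3 * Δ)) - (f C + d1 * (ε * (3 * Δ)) + d2 * (ε * (3 * Δ)) ^ 2 / 2
                + d3 * (ε * (3 * Δ)) ^ 3 / 6)) / (ε * (3 * Δ)) ^ 3) )) := by
    intro Δ hΔ
    rw [hEUV Δ]
    field_simp
    ring
  convert Tendsto.congr' ?_ hQ using 2
  · rcases hε with rfl | rfl <;> norm_num <;> field_simp <;> ring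
  · filter_upwards [self_mem_nhdsWithin] with Δ hΔp
    have hΔ : Δ ≠ 0 := (Set.mem_Ioi.mp hΔp).ne'
    simp only [Pi.div_apply]
    rw [e2 Δ hΔ, e1 Δ hΔ, mul_div_mul_left _ _ (pow_ne_zero 3 hΔ)]

/-- Limits identifying the boundary masses `P_A` and `P_B` of the continuous approximate
design for AR(2) errors of exponential type: with `g_A(Δ)` and `g_B(Δ)` the sums of the
two leftmost (resp. rightmost) unnormalized optimal weights, as `Δ → 0⁺`,
`g_A(Δ)/(S(Δ) f(A)) → (f'''(A) - (λ₁²+λ₁λ₂+λ₂²)f'(A) + λ₁λ₂(λ₁+λ₂)f(A))/(s₃ f(A))` and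
`g_B(Δ)/(S(Δ) f(B)) → (-f'''(B) + (λ₁²+λ₁λ₂+λ₂²)f'(B) + λ₁λ₂(λ₁+λ₂)f(B))/(s₃ f(B))`. -/
theorem ar2_exp_boundary_P_limits (l₁ l₂ : ℝ) (h₁ : 0 < l₁) (h₂ : 0 < l₂) (hne : l₁ ≠ l₂)
    (s₃ : ℝ) (hs₃ : s₃ = 2 * l₁ * l₂ * (l₁ + l₂))
    (a₁ a₂ S : ℝ → ℝ)
    (ha₁ : ∀ Δ, a₁ Δ = Real.exp (-l₁ * Δ) + Real.exp (-l₂ * Δ))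
    (ha₂ : ∀ Δ, a₂ Δ = -Real.exp (-(l₁ + l₂) * Δ))
    (hS : ∀ Δ, S Δ = (1 + a₁ Δ - a₂ Δ) * (1 - a₁ Δ - a₂ Δ) * (1 + a₂ Δ) / (1 - a₂ Δ))
    (A B : ℝ) (hAB : A < B) (f : ℝ → ℝ)
    (hfA : ContDiffAt ℝ 3 f A) (hfB : ContDiffAt ℝ 3 f B)
    (hA0 : f A ≠ 0) (hB0 : f B ≠ 0)
    (gA gB : ℝ → ℝ)
    (hgA : ∀ Δ, gA Δ = (f A - a₁ Δ * f (A + Δ) - a₂ Δ * f (A + 2 * Δ))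
      + (-(a₁ Δ) * f A + (1 + (a₁ Δ) ^ 2) * f (A + Δ)
          + (a₁ Δ * a₂ Δ - a₁ Δ) * f (A + 2 * Δ) - a₂ Δ * f (A + 3 * Δ)))
    (hgB : ∀ Δ, gB Δ = (f B - a₁ Δ * f (B - Δ) - a₂ Δ * f (B - 2 * Δ))
      + (-(a₁ Δ) * f B + (1 + (a₁ Δ) ^ 2) * f (B - Δ)
          + (a₁ Δ * a₂ Δ - a₁ Δ) * f (B - 2 * Δ) - a₂ Δ * f (B - 3 * Δ))) :
    Tendsto (fun Δ => gA Δ / (S Δ * f A)) (nhdsWithin 0 (Set.Ioi 0))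
      (nhds ((deriv (deriv (deriv f)) A - (l₁ ^ 2 + l₁ * l₂ + l₂ ^ 2) * deriv f A
        + l₁ * l₂ * (l₁ + l₂) * f A) / (s₃ * f A))) ∧
    Tendsto (fun Δ => gB Δ / (S Δ * f B)) (nhdsWithin 0 (Set.Ioi 0))
      (nhds ((-deriv (deriv (deriv f)) B + (l₁ ^ 2 + l₁ * l₂ + l₂ ^ 2) * deriv f B
        + l₁ * l₂ * (l₁ + l₂) * f B) / (s₃ * f B))) := by
  constructor
  · have h := side l₁ l₂ h₁ h₂ f A hfA hA0 1 (Or.inl rfl)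
    have h2 : Tendsto (fun Δ => gA Δ / (S Δ * f A)) (nhdsWithin 0 (Set.Ioi 0))
        (nhds ((1 * deriv (deriv (deriv f)) A - 1 * (l₁ ^ 2 + l₁ * l₂ + l₂ ^ 2) * deriv f A
          + l₁ * l₂ * (l₁ + l₂) * f A) / (2 * l₁ * l₂ * (l₁ + l₂) * f A))) := h.congr (fun Δ => by
      rw [hgA Δ, hS Δ]
      simp only [ha₁, ha₂]
      norm_num)
    convert h2 using 2
    rw [hs₃]
    ring
  · have h := side l₁ l₂ h₁ h₂ f B hfB hB0 (-1) (Or.inr rfl)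
    have h2 : Tendsto (fun Δ => gB Δ / (S Δ * f B)) (nhdsWithin 0 (Set.Ioi 0))
        (nhds ((-1 * deriv (deriv (deriv f)) B - -1 * (l₁ ^ 2 + l₁ * l₂ + l₂ ^ 2) * deriv f B
          + l₁ * l₂ * (l₁ + l₂) * f B) / (2 * l₁ * l₂ * (l₁ + l₂) * f B))) := h.congr (fun Δ => by
      rw [hgB Δ, hS Δ]
      simp only [ha₁, ha₂]
      norm_num [sub_eq_add_neg])
    convert h2 using 2
    rw [hs₃]
    ring
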